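/- arXiv:math/0608259 — 5 statements merged into one kernel-verified Lean document; each statement's English description precedes it below -/
import Mathlib

section
/- Let X ⊆ Σ^ℤ be a subshift, let Y⁻ ⊆ X⁻ be dense in X⁻, and let g : {(y⁻,σ) ∈ Y⁻ × Σ : σ ∈ Γ₁⁺(y⁻)} → [0,1] be continuous (for the subspace topology) with Σ_{σ ∈ Γ₁⁺(y⁻)} g(y⁻,σ) = 1 for every y⁻ ∈ Y⁻. Then for every x⁻ ∈ Y⁻ and every α ∈ Γ₁⁺(x⁻) \ Δ₁⁺(x⁻) one has g(x⁻,α) = 0. -/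
open Set Filter Topology

/-! Basic symbolic dynamics notions.

* The alphabet is a nonempty finite type `A` with the discrete topology; `A^ℤ` and `A^ℕ`
  carry the product topology.
* A left-infinite sequence `x⁻ = (x_i)_{i ≤ 0}` is encoded as `u : ℕ → A` with `u n = x (-n)`.
* Finite words are lists, read left to right.
-/

/-- The shift `S`. -/
def shiftMap {A : Type*} (x : ℤ → A) : ℤ → A := fun i => x (i + 1)

/-- A subshift: a nonempty closed shift-invariant subset of `A^ℤ`. -/
def IsSubshift {A : Type*} [TopologicalSpace A] (X : Set (ℤ → A)) : Prop :=
  X.Nonempty ∧ IsClosed X ∧ shiftMap '' X = X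

/-- `X⁻`: the left-infinite rays of points of `X` (encoded via `u n = x (-n)`). -/
def Xminus {A : Type*} (X : Set (ℤ → A)) : Set (ℕ → A) :=
  {u | ∃ x ∈ X, ∀ n : ℕ, u n = x (-(n : ℤ))}

/-- The word `w` occurs in `x` (as a block of consecutive coordinates). -/
def Occurs {A : Type*} (w : List A) (x : ℤ → A) : Prop :=
  ∃ i : ℤ, ∀ j : Fin w.length, x (i + ((j : ℕ) : ℤ)) = w.get j

/-- A finite word is admissible for `X` if it occurs in some point of `X`. -/
def Admissible {A : Type*} (X : Set (ℤ → A)) (w : List A) : Prop :=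
  ∃ x ∈ X, Occurs w x

/-- The left ray `u` ends in the word `w`, i.e. `(x_{-k},…,x_0) = w` where `|w| = k+1`. -/
def EndsIn {A : Type*} (u : ℕ → A) (w : List A) : Prop :=
  ∀ j : Fin w.length, u (w.length - 1 - (j : ℕ)) = w.get j

/-- `Γ₁⁺(x⁻)`: the letters that can follow the left ray `u` in `X`. -/
def Gamma1 {A : Type*} (X : Set (ℤ → A)) (u : ℕ → A) : Set A :=
  {σ | ∃ x ∈ X, (∀ n : ℕ, x (-(n : ℤ)) = u n) ∧ x 1 = σ}

/-- `x` carries the word `b` on the coordinate interval `[-(|b| - 1), 0]`. -/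
def EndsAtZero {A : Type*} (x : ℤ → A) (b : List A) : Prop :=
  ∀ j : Fin b.length, x (((j : ℕ) : ℤ) - ((b.length : ℤ) - 1)) = b.get j

/-- `c ∈ ω⁺(b)`: every point of `X` carrying `b` ending at coordinate `0` can be modified
on the positive coordinates so as to continue with the word `c`. -/
def OmegaWord {A : Type*} (X : Set (ℤ → A)) (b c : List A) : Prop :=
  ∀ x ∈ X, EndsAtZero x b →
    ∃ x' ∈ X, (∀ i : ℤ, i ≤ 0 → x' i = x i) ∧
      ∀ j : Fin c.length, x' (((j : ℕ) : ℤ) + 1) = c.get j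

/-- `ω₁⁺(b)`. -/
def omega1 {A : Type*} (X : Set (ℤ → A)) (b : List A) : Set A :=
  {σ | OmegaWord X b [σ]}

/-- The word `(x_{-n},…,x_0)` read off the left ray `u`. -/
def lastWord {A : Type*} (u : ℕ → A) (n : ℕ) : List A :=
  List.ofFn fun j : Fin (n + 1) => u (n - (j : ℕ))

/-- `Δ₁⁺(x⁻) = ⋃ₙ ω₁⁺((x_{-n},…,x_0))`. -/
def Delta1 {A : Type*} (X : Set (ℤ → A)) (u : ℕ → A) : Set A :=
  ⋃ n : ℕ, omega1 X (lastWord u n)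

/-- Property g: `Δ₁⁺(x⁻) ≠ ∅` for every `x⁻ ∈ X⁻`. -/
def PropertyG {A : Type*} (X : Set (ℤ → A)) : Prop :=
  ∀ u ∈ Xminus X, (Delta1 X u).Nonempty

/-- A g-function for `X`, encoded as a total function `g : (ℕ → A) → A → ℝ`:
continuity (of the restriction to the graph of `Γ₁⁺`, i.e. of the map on
`{(x⁻,σ) : σ ∈ Γ₁⁺(x⁻)}`), values in `[0,1]` there, and the normalization
`∑_{σ ∈ Γ₁⁺(x⁻)} g (x⁻, σ) = 1`. -/
def IsGFunction {A : Type*} [Fintype A] [TopologicalSpace A] (X : Set (ℤ → A))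
    (g : (ℕ → A) → A → ℝ) : Prop :=
  ContinuousOn (fun p : (ℕ → A) × A => g p.1 p.2)
      {p : (ℕ → A) × A | p.1 ∈ Xminus X ∧ p.2 ∈ Gamma1 X p.1} ∧
  (∀ u ∈ Xminus X, ∀ σ ∈ Gamma1 X u, g u σ ∈ Set.Icc (0 : ℝ) 1) ∧
  (∀ u ∈ Xminus X, ∑ σ : A, (Gamma1 X u).indicator (g u) σ = 1)

/-- Property (D): for every admissible word `b` and letter `σ` with `bσ` admissible there
is a word `a` with `ab` admissible and `σ ∈ ω₁⁺(ab)`. -/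
def PropertyD {A : Type*} (X : Set (ℤ → A)) : Prop :=
  ∀ (b : List A) (σ : A), b ≠ [] → Admissible X (b ++ [σ]) →
    ∃ a : List A, a ≠ [] ∧ Admissible X (a ++ b) ∧ σ ∈ omega1 X (a ++ b)


lemma graph_closed {A : Type*} [Fintype A] [TopologicalSpace A] [DiscreteTopology A]
    (X : Set (ℤ → A)) (hXc : IsClosed X) :
    IsClosed {p : (ℕ → A) × A | p.2 ∈ Gamma1 X p.1} := by
  have hc : IsCompact X := hXc.isCompact
  have himg : {p : (ℕ → A) × A | p.2 ∈ Gamma1 X p.1}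
      = (fun x : ℤ → A => ((fun n : ℕ => x (-(n : ℤ))), x 1)) '' X := by
    ext ⟨v, σ⟩
    constructor
    · rintro ⟨x, hx, h1, h2⟩
      exact ⟨x, hx, by ext <;> simp [h1, h2]⟩
    · rintro ⟨x, hx, h⟩
      obtain ⟨h1, h2⟩ := Prod.mk.injEq .. ▸ h
      exact ⟨x, hx, fun n => congrFun h1 n, h2⟩
  rw [himg]
  exact (hc.image (by continuity)).isClosed

lemma extract_ray {A : Type*} (X : Set (ℤ → A)) (u : ℕ → A) (n : ℕ) (α : A)
    (h : α ∉ omega1 X (lastWord u n)) :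
    ∃ v ∈ Xminus X, (∀ m ≤ n, v m = u m) ∧ α ∉ Gamma1 X v := by
  simp only [omega1, OmegaWord, mem_setOf_eq, not_forall] at h
  obtain ⟨x, hx, hend, hno⟩ := h
  refine ⟨fun m => x (-(m : ℤ)), ⟨x, hx, fun n => rfl⟩, ?_, ?_⟩
  · intro m hm
    have hj : n - m < n + 1 := by omega
    have := hend ⟨n - m, by simpa [lastWord] using hj⟩
    simp only [lastWord, List.get_ofFn, List.length_ofFn] at this
    have e1 : (((n - m : ℕ) : ℤ)) - (((n + 1 : ℕ) : ℤ) - 1) = -(m : ℤ) := by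
      have := Nat.cast_sub hm (R := ℤ); omega
    have e2 : n - (n - m) = m := by omega
    show x (-(m:ℤ)) = u m
    rw [← e1]
    simpa [e2] using this
  · rintro ⟨x'', hx'', h1, h2⟩
    apply hno
    refine ⟨x'', hx'', ?_, ?_⟩
    · intro i hi
      have : i = -(((-i).toNat : ℕ) : ℤ) := by omega
      rw [this, h1]
    · intro j
      have h0 : (j : ℕ) = 0 := Nat.lt_one_iff.mp (by simpa using j.isLt)
      simp [h0, h2]

lemma sum_indicator_eq {A : Type*} [Fintype A] (s : Set A) [DecidablePred (· ∈ s)] (f : A → ℝ) :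
    ∑ σ : A, s.indicator f σ
      = ∑ σ ∈ Finset.univ.filter (fun σ => σ ∈ s), f σ := by
  rw [Finset.sum_filter]
  exact Finset.sum_congr rfl fun σ _ => by simp [Set.indicator_apply]

/-- Lemma 2.1.  If `Y⁻ ⊆ X⁻` is dense in `X⁻` and `g`, defined on
`{(y⁻,σ) : y⁻ ∈ Y⁻, σ ∈ Γ₁⁺(y⁻)}`, is continuous with values in `[0,1]` and satisfies
`∑_{σ ∈ Γ₁⁺(y⁻)} g (y⁻,σ) = 1` for all `y⁻ ∈ Y⁻`, then `g (x⁻,α) = 0` for every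
`x⁻ ∈ Y⁻` and `α ∈ Γ₁⁺(x⁻) \ Δ₁⁺(x⁻)`. -/
theorem stmt0 {A : Type*} [Fintype A] [Nonempty A] [TopologicalSpace A] [DiscreteTopology A]
    (X : Set (ℤ → A)) (hX : IsSubshift X)
    (Y : Set (ℕ → A)) (hYX : Y ⊆ Xminus X) (hdense : Xminus X ⊆ closure Y)
    (g : (ℕ → A) → A → ℝ)
    (hcont : ContinuousOn (fun p : (ℕ → A) × A => g p.1 p.2)
      {p : (ℕ → A) × A | p.1 ∈ Y ∧ p.2 ∈ Gamma1 X p.1})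
    (hrange : ∀ u ∈ Y, ∀ σ ∈ Gamma1 X u, g u σ ∈ Set.Icc (0 : ℝ) 1)
    (hsum : ∀ u ∈ Y, ∑ σ : A, (Gamma1 X u).indicator (g u) σ = 1)
    (u : ℕ → A) (hu : u ∈ Y) (α : A) (hα : α ∈ Gamma1 X u \ Delta1 X u) :
    g u α = 0 := by
    classical
  obtain ⟨hα1, hα2⟩ := hα
  have hG : IsClosed {p : (ℕ → A) × A | p.2 ∈ Gamma1 X p.1} := graph_closed X hX.2.1
  -- choose approximating rays in Y
  have hy : ∀ n : ℕ, ∃ y ∈ Y, (∀ m ≤ n, y m = u m) ∧ α ∉ Gamma1 X y := by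
    intro n
    have hnot : α ∉ omega1 X (lastWord u n) := fun hn => hα2 (mem_iUnion.mpr ⟨n, hn⟩)
    obtain ⟨v, hvX, hvu, hvα⟩ := extract_ray X u n α hnot
    have h1 : IsOpen {w : ℕ → A | ∀ m ≤ n, w m = u m} := by
      have he : {w : ℕ → A | ∀ m ≤ n, w m = u m}
          = ⋂ m ∈ Finset.range (n + 1), {w : ℕ → A | w m = u m} := by
        ext w; simp [Nat.lt_succ_iff]
      rw [he]
      refine isOpen_biInter_finset fun m _ => ?_
      have hpre : {w : ℕ → A | w m = u m} = (fun w : ℕ → A => w m) ⁻¹' {u m} := rfl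
      rw [hpre]
      exact IsOpen.preimage (continuous_apply m) (isOpen_discrete _)
    have h2 : IsOpen {w : ℕ → A | α ∉ Gamma1 X w} := by
      have he : {w : ℕ → A | α ∉ Gamma1 X w}
          = (fun w => (w, α)) ⁻¹' {p : (ℕ → A) × A | p.2 ∈ Gamma1 X p.1}ᶜ := rfl
      rw [he]
      exact hG.isOpen_compl.preimage (by continuity)
    have hUopen : IsOpen ({w : ℕ → A | ∀ m ≤ n, w m = u m} ∩ {w | α ∉ Gamma1 X w}) :=
      h1.inter h2
    obtain ⟨w, ⟨hw1, hw2⟩, hwY⟩ :=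
      mem_closure_iff.mp (hdense hvX) _ hUopen ⟨hvu, hvα⟩
    exact ⟨w, hwY, hw1, hw2⟩
  choose y hyY hyu hyα using hy
  -- y n → u
  have hty : Tendsto y atTop (𝓝 u) := by
    rw [tendsto_pi_nhds]
    intro m
    refine tendsto_nhds_of_eventually_eq ?_
    filter_upwards [eventually_ge_atTop m] with n hn
    exact hyu n m hn
  -- pigeonhole: constant Γ₁⁺ along a subsequence
  obtain ⟨Γ, hΓinf⟩ := Finite.exists_infinite_fiber (fun n => Gamma1 X (y n))
  have hfreq : ∃ᶠ n in atTop, Gamma1 X (y n) = Γ := by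
    rw [Nat.frequently_atTop_iff_infinite]
    exact Set.infinite_coe_iff.mp hΓinf
  obtain ⟨φ, hφmono, hφ⟩ := Filter.extraction_of_frequently_atTop hfreq
  set z : ℕ → ℕ → A := fun k => y (φ k) with hz
  have hzY : ∀ k, z k ∈ Y := fun k => hyY (φ k)
  have hzΓ : ∀ k, Gamma1 X (z k) = Γ := fun k => hφ k
  have htz : Tendsto z atTop (𝓝 u) := hty.comp hφmono.tendsto_atTop
  -- Γ ⊆ Γ₁⁺(u)
  have hsub : Γ ⊆ Gamma1 X u := by
    intro σ hσ
    have hmem : ∀ k, (z k, σ) ∈ {p : (ℕ → A) × A | p.2 ∈ Gamma1 X p.1} := by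
      intro k
      show σ ∈ Gamma1 X (z k)
      rw [hzΓ k]; exact hσ
    have hpt : Tendsto (fun k => (z k, σ)) atTop (𝓝 (u, σ)) :=
      htz.prodMk_nhds tendsto_const_nhds
    exact hG.mem_of_tendsto hpt (Eventually.of_forall hmem)
  -- α ∉ Γ
  have hαΓ : α ∉ Γ := fun h => hyα (φ 0) ((hzΓ 0) ▸ h)
  -- convergence of g along the subsequence, for σ ∈ Γ
  have hglim : ∀ σ ∈ Γ, Tendsto (fun k => g (z k) σ) atTop (𝓝 (g u σ)) := by
    intro σ hσ
    have hcw : ContinuousWithinAt (fun p : (ℕ → A) × A => g p.1 p.2)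
        {p : (ℕ → A) × A | p.1 ∈ Y ∧ p.2 ∈ Gamma1 X p.1} (u, σ) :=
      hcont (u, σ) ⟨hu, hsub hσ⟩
    have hpt : Tendsto (fun k => (z k, σ))
        atTop (𝓝[{p : (ℕ → A) × A | p.1 ∈ Y ∧ p.2 ∈ Gamma1 X p.1}] (u, σ)) := by
      rw [tendsto_nhdsWithin_iff]
      exact ⟨htz.prodMk_nhds tendsto_const_nhds,
        Eventually.of_forall fun k => ⟨hzY k, by show σ ∈ Gamma1 X (z k); rw [hzΓ k]; exact hσ⟩⟩
    exact hcw.tendsto.comp hpt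
  -- Finsets
  set Γfin : Finset A := Finset.univ.filter (fun σ => σ ∈ Γ) with hΓfin
  set Gfin : Finset A := Finset.univ.filter (fun σ => σ ∈ Gamma1 X u) with hGfin
  have hsum1 : ∀ k, ∑ σ ∈ Γfin, g (z k) σ = 1 := by
    intro k
    have := hsum (z k) (hzY k)
    rwa [sum_indicator_eq, hzΓ k] at this
  have hlim : Tendsto (fun k => ∑ σ ∈ Γfin, g (z k) σ) atTop (𝓝 (∑ σ ∈ Γfin, g u σ)) :=
    tendsto_finset_sum _ fun σ hσ => hglim σ (by simpa [hΓfin] using hσ)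
  have hsumΓ : ∑ σ ∈ Γfin, g u σ = 1 := by
    have : Tendsto (fun _ : ℕ => (1 : ℝ)) atTop (𝓝 (∑ σ ∈ Γfin, g u σ)) := by
      simpa [funext hsum1] using hlim
    exact tendsto_nhds_unique this tendsto_const_nhds
  have hsumG : ∑ σ ∈ Gfin, g u σ = 1 := by
    have := hsum u hu
    rwa [sum_indicator_eq] at this
  have hsubfin : Γfin ⊆ Gfin := by
    intro σ hσ
    simp only [hΓfin, hGfin, Finset.mem_filter, Finset.mem_univ, true_and] at hσ ⊢
    exact hsub hσ
  have hzero : ∑ σ ∈ Gfin \ Γfin, g u σ = 0 := by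
    have := Finset.sum_sdiff (f := g u) hsubfin
    rw [hsumΓ, hsumG] at this
    linarith
  have hnonneg : ∀ σ ∈ Gfin \ Γfin, 0 ≤ g u σ := by
    intro σ hσ
    have hσG : σ ∈ Gamma1 X u := by
      have := (Finset.mem_sdiff.mp hσ).1
      simpa [hGfin] using this
    exact (hrange u hu σ hσG).1
  have hαmem : α ∈ Gfin \ Γfin := by
    rw [Finset.mem_sdiff]
    constructor
    · simp [hGfin, hα1]
    · simp [hΓfin, hαΓ]
  exact (Finset.sum_eq_zero_iff_of_nonneg hnonneg).mp hzero α hαmem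
end

section
/- If a subshift X ⊆ Σ^ℤ has a strictly positive g-function, i.e. a g-function g with g(x⁻,σ) > 0 for every x⁻ ∈ X⁻ and every σ ∈ Γ₁⁺(x⁻), then X is of finite type. -/
open Set Filter Topology

/-- `X` is of finite type: it is defined by excluding finitely many words. -/
def IsFiniteType {A : Type*} (X : Set (ℤ → A)) : Prop :=
  ∃ F : Set (List A), F.Finite ∧ X = {x : ℤ → A | ∀ w ∈ F, ¬Occurs w x}

section Aux
variable {A : Type*}

def transl (n : ℤ) (x : ℤ → A) : ℤ → A := fun i => x (i + n)

lemma shiftMap_injective : Function.Injective (shiftMap (A := A)) := by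
  intro x y h
  funext i
  have := congrFun h (i - 1)
  simpa [shiftMap] using this

variable [TopologicalSpace A] {X : Set (ℤ → A)}

lemma mem_shift_iff (hX : IsSubshift X) {x : ℤ → A} : shiftMap x ∈ X ↔ x ∈ X := by
  constructor
  · intro h
    rw [← hX.2.2] at h
    obtain ⟨y, hy, hxy⟩ := h
    rwa [← shiftMap_injective hxy]
  · intro h
    rw [← hX.2.2]; exact ⟨x, h, rfl⟩

lemma transl_mem (hX : IsSubshift X) (n : ℤ) {x : ℤ → A} (hx : x ∈ X) :
    transl n x ∈ X := by
  induction n using Int.induction_on with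
  | zero => exact (funext fun i => congrArg x (add_zero i) : transl 0 x = x).symm ▸ hx
  | succ n ih =>
      have h : transl (n + 1) x = shiftMap (transl n x) :=
        funext fun i => congrArg x (by push_cast; ring)
      rw [h]; exact (mem_shift_iff hX).2 ih
  | pred n ih =>
      have h : shiftMap (transl (-(n:ℤ) - 1) x) = transl (-(n:ℤ)) x :=
        funext fun i => congrArg x (by push_cast; ring)
      exact (mem_shift_iff hX).1 (by rw [h]; exact ih)

lemma admissible_place {w : List A} (hX : IsSubshift X) (hw : Admissible X w) (k : ℤ) :
    ∃ y ∈ X, ∀ j : ℕ, (hj : j < w.length) → y (k + j) = w.get ⟨j, hj⟩ := by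
  obtain ⟨x, hx, i, hocc⟩ := hw
  refine ⟨transl (i - k) x, transl_mem hX _ hx, fun j hj => ?_⟩
  have h := hocc ⟨j, hj⟩
  show x (k + (j:ℤ) + (i - k)) = w.get ⟨j, hj⟩
  rw [show k + (j:ℤ) + (i - k) = i + j by ring]
  exact h

lemma block_admissible {x : ℤ → A} (hx : x ∈ X) (k : ℤ) (L : ℕ) :
    Admissible X (List.ofFn fun j : Fin L => x (k + ((j:ℕ):ℤ))) := by
  refine ⟨x, hx, k, fun j => ?_⟩
  simp [List.get_ofFn]

lemma admissible_ofFn_iff {L : ℕ} (f : Fin L → A) (y : ℤ → A) (hy : y ∈ X) (i : ℤ)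
    (h : ∀ j : ℕ, (hj : j < L) → y (i + j) = f ⟨j, hj⟩) :
    Admissible X (List.ofFn f) := by
  refine ⟨y, hy, i, fun j => ?_⟩
  have hj : (j : ℕ) < L := by simpa using j.2
  rw [List.get_ofFn]
  exact h j hj

end Aux

section ClaimA
variable {A : Type*} [Fintype A] [TopologicalSpace A] [DiscreteTopology A]
variable {X : Set (ℤ → A)}

lemma graph_eq (X : Set (ℤ → A)) :
    {p : (ℕ → A) × A | p.1 ∈ Xminus X ∧ p.2 ∈ Gamma1 X p.1}
      = (fun x : ℤ → A => ((fun n : ℕ => x (-(n:ℤ))), x 1)) '' X := by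
  ext ⟨u, σ⟩
  constructor
  · rintro ⟨-, ⟨y, hy, hyu, hy1⟩⟩
    exact ⟨y, hy, Prod.ext (funext fun n => hyu n) hy1⟩
  · rintro ⟨x, hx, hφ⟩
    exact hφ ▸ ⟨⟨x, hx, fun n => rfl⟩, ⟨x, hx, fun n => rfl, rfl⟩⟩

lemma xminus_eq (X : Set (ℤ → A)) :
    Xminus X = (fun x : ℤ → A => fun n : ℕ => x (-(n:ℤ))) '' X := by
  ext u
  constructor
  · rintro ⟨x, hx, hxu⟩
    exact ⟨x, hx, funext fun n => (hxu n).symm⟩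
  · rintro ⟨x, hx, rfl⟩
    exact ⟨x, hx, fun n => rfl⟩

lemma claimA (hX : IsSubshift X) (g : (ℕ → A) → A → ℝ) (hg : IsGFunction X g)
    (hpos : ∀ u ∈ Xminus X, ∀ σ ∈ Gamma1 X u, 0 < g u σ) :
    ∃ N : ℕ, ∀ u ∈ Xminus X, ∀ v ∈ Xminus X, (∀ n ≤ N, u n = v n) →
      Gamma1 X v ⊆ Gamma1 X u := by
  classical
  by_contra hcon
  push_neg at hcon
  have hcon' : ∀ N : ℕ, ∃ u ∈ Xminus X, ∃ v ∈ Xminus X, (∀ n ≤ N, u n = v n) ∧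
      ∃ σ ∈ Gamma1 X v, σ ∉ Gamma1 X u := by
    intro N
    obtain ⟨u, hu, v, hv, hagree, hns⟩ := hcon N
    exact ⟨u, hu, v, hv, hagree, Set.not_subset.mp hns⟩
  choose u hu v hv hagree σ hσv hσu using hcon'
  -- compactness of X, X⁻, and the graph
  have hXcpt : IsCompact X := hX.2.1.isCompact
  have hcont1 : Continuous (fun x : ℤ → A => fun n : ℕ => x (-(n:ℤ))) :=
    continuous_pi fun n => continuous_apply _
  have hXmcpt : IsCompact (Xminus X) := by
    rw [xminus_eq]; exact hXcpt.image hcont1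
  set S := {p : (ℕ → A) × A | p.1 ∈ Xminus X ∧ p.2 ∈ Gamma1 X p.1} with hSdef
  have hScl : IsClosed S := by
    rw [hSdef, graph_eq]
    exact (hXcpt.image (hcont1.prodMk (continuous_apply (1:ℤ)))).isClosed
  -- pigeonhole on (σ N, Γ₁⁺(u N))
  obtain ⟨⟨σ₀, Γ₀⟩, hfib⟩ :=
    Finite.exists_infinite_fiber (fun N => (σ N, Gamma1 X (u N)) : ℕ → A × Set A)
  have hsinf : ((fun N => (σ N, Gamma1 X (u N))) ⁻¹' {(σ₀, Γ₀)}).Infinite :=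
    Set.infinite_coe_iff.mp hfib
  set s := (fun N => (σ N, Gamma1 X (u N))) ⁻¹' {(σ₀, Γ₀)} with hs
  have hφmono : StrictMono (Nat.nth (· ∈ s)) := Nat.nth_strictMono hsinf
  have hφmem : ∀ k, Nat.nth (· ∈ s) k ∈ s := fun k => Nat.nth_mem_of_infinite hsinf k
  obtain ⟨u', hu'Xm, ψ, hψ, hconv⟩ :=
    hXmcpt.tendsto_subseq (x := fun k => u (Nat.nth (· ∈ s) k)) (fun k => hu _)
  set χ : ℕ → ℕ := fun k => Nat.nth (· ∈ s) (ψ k) with hχ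
  have hχmono : StrictMono χ := hφmono.comp hψ
  have hχmem : ∀ k, χ k ∈ s := fun k => hφmem (ψ k)
  have hσ₀ : ∀ k, σ (χ k) = σ₀ := fun k => congrArg Prod.fst (hχmem k)
  have hΓ : ∀ k, Gamma1 X (u (χ k)) = Γ₀ := fun k => congrArg Prod.snd (hχmem k)
  have hconv' : Filter.Tendsto (fun k => u (χ k)) Filter.atTop (nhds u') := hconv
  -- v also converges to u'
  have hvconv : Filter.Tendsto (fun k => v (χ k)) Filter.atTop (nhds u') := by
    rw [tendsto_pi_nhds]
    intro n
    have h1 : Filter.Tendsto (fun k => u (χ k) n) Filter.atTop (nhds (u' n)) :=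
      tendsto_pi_nhds.mp hconv' n
    refine h1.congr' ?_
    filter_upwards [Filter.eventually_ge_atTop n] with k hk
    exact hagree (χ k) n (hk.trans hχmono.le_apply)
  -- σ₀ ∈ Γ₁⁺(u')
  have hσ₀u' : σ₀ ∈ Gamma1 X u' := by
    have hmem : ∀ k, ((v (χ k)), σ₀) ∈ S := fun k => ⟨hv _, hσ₀ k ▸ hσv (χ k)⟩
    have htd : Filter.Tendsto (fun k => ((v (χ k)), σ₀)) Filter.atTop (nhds (u', σ₀)) :=
      hvconv.prodMk_nhds tendsto_const_nhds
    exact (hScl.mem_of_tendsto htd (Filter.Eventually.of_forall hmem)).2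
  -- Γ₀ ⊆ Γ₁⁺(u')
  have hΓ₀sub : Γ₀ ⊆ Gamma1 X u' := by
    intro τ hτ
    have hmem : ∀ k, ((u (χ k)), τ) ∈ S := fun k => ⟨hu _, (hΓ k).symm ▸ hτ⟩
    have htd : Filter.Tendsto (fun k => ((u (χ k)), τ)) Filter.atTop (nhds (u', τ)) :=
      hconv'.prodMk_nhds tendsto_const_nhds
    exact (hScl.mem_of_tendsto htd (Filter.Eventually.of_forall hmem)).2
  have hσ₀Γ₀ : σ₀ ∉ Γ₀ := fun hmem => hσu (χ 0) (by rw [hΓ 0, hσ₀ 0]; exact hmem)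
  -- limit of the normalization sums
  have hsum : ∀ k, ∑ τ : A, Γ₀.indicator (g (u (χ k))) τ = 1 := by
    intro k
    have := hg.2.2 (u (χ k)) (hu _)
    rwa [hΓ k] at this
  have htendsum : Filter.Tendsto (fun k => ∑ τ : A, Γ₀.indicator (g (u (χ k))) τ)
      Filter.atTop (nhds (∑ τ : A, Γ₀.indicator (g u') τ)) := by
    refine tendsto_finset_sum _ fun τ _ => ?_
    by_cases hτ : τ ∈ Γ₀
    · simp only [Set.indicator_of_mem hτ]
      have cw := hg.1 (u', τ) ⟨hu'Xm, hΓ₀sub hτ⟩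
      have hseq : Filter.Tendsto (fun k => ((u (χ k)), τ)) Filter.atTop
          (nhdsWithin (u', τ) S) := by
        rw [tendsto_nhdsWithin_iff]
        exact ⟨hconv'.prodMk_nhds tendsto_const_nhds,
          Filter.Eventually.of_forall fun k => ⟨hu _, (hΓ k).symm ▸ hτ⟩⟩
      exact cw.tendsto.comp hseq
    · simp only [Set.indicator_of_notMem hτ]
      exact tendsto_const_nhds
  have h1 : ∑ τ : A, Γ₀.indicator (g u') τ = 1 := by
    have : Filter.Tendsto (fun _ : ℕ => (1:ℝ)) Filter.atTop
        (nhds (∑ τ : A, Γ₀.indicator (g u') τ)) := by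
      refine htendsum.congr fun k => hsum k
    exact tendsto_nhds_unique this tendsto_const_nhds
  have h2 : ∑ τ : A, (Gamma1 X u').indicator (g u') τ = 1 := hg.2.2 u' hu'Xm
  -- contradiction
  have hdiffsum : ∑ τ : A, ((Gamma1 X u').indicator (g u') τ - Γ₀.indicator (g u') τ) = 0 := by
    rw [Finset.sum_sub_distrib, h1, h2]; ring
  have hpos' : (0:ℝ) < ∑ τ : A,
      ((Gamma1 X u').indicator (g u') τ - Γ₀.indicator (g u') τ) := by
    refine Finset.sum_pos' (fun τ _ => ?_) ⟨σ₀, Finset.mem_univ _, ?_⟩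
    · by_cases hτ₀ : τ ∈ Γ₀
      · rw [Set.indicator_of_mem hτ₀, Set.indicator_of_mem (hΓ₀sub hτ₀)]; simp
      · rw [Set.indicator_of_notMem hτ₀]
        by_cases hτ₁ : τ ∈ Gamma1 X u'
        · rw [Set.indicator_of_mem hτ₁]
          have := hg.2.1 u' hu'Xm τ hτ₁
          simpa using this.1
        · rw [Set.indicator_of_notMem hτ₁]; simp
    · rw [Set.indicator_of_notMem hσ₀Γ₀, Set.indicator_of_mem hσ₀u']
      simpa using hpos u' hu'Xm σ₀ hσ₀u'
  exact absurd hdiffsum (by linarith)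

end ClaimA

section Place
variable {A : Type*} [TopologicalSpace A] {X : Set (ℤ → A)}

lemma admissible_place_ofFn {L : ℕ} (hX : IsSubshift X) (f : Fin L → A)
    (hw : Admissible X (List.ofFn f)) (k : ℤ) :
    ∃ y ∈ X, ∀ j : ℕ, (hj : j < L) → y (k + j) = f ⟨j, hj⟩ := by
  obtain ⟨y, hyX, hy⟩ := admissible_place hX hw k
  refine ⟨y, hyX, fun j hj => ?_⟩
  have hj' : j < (List.ofFn f).length := by simpa using hj
  rw [hy j hj', List.get_ofFn]
  rfl

end Place


/-- Corollary 2.2.  A subshift with a strictly positive g-function is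
of finite type. -/
theorem stmt1 {A : Type*} [Fintype A] [Nonempty A] [TopologicalSpace A] [DiscreteTopology A]
    (X : Set (ℤ → A)) (hX : IsSubshift X)
    (h : ∃ g : (ℕ → A) → A → ℝ, IsGFunction X g ∧
      ∀ u ∈ Xminus X, ∀ σ ∈ Gamma1 X u, 0 < g u σ) :
    IsFiniteType X := by
  classical
  obtain ⟨g, hg, hpos⟩ := h
  obtain ⟨N, hN⟩ := claimA hX g hg hpos
  refine ⟨{w : List A | w.length = N + 2 ∧ ¬ Admissible X w}, ?_, ?_⟩
  · -- finiteness of the forbidden set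
    apply Set.Finite.subset (Set.finite_range (List.ofFn : (Fin (N+2) → A) → List A))
    rintro w ⟨hlen, -⟩
    refine ⟨fun j => w.get (Fin.cast hlen.symm j), ?_⟩
    apply List.ext_get (by simp [hlen])
    intro i h1 h2
    simp only [List.get_ofFn]
    rfl
  · ext x
    constructor
    · rintro hx w ⟨-, hna⟩ hocc
      exact hna ⟨x, hx, hocc⟩
    · intro hx
      -- every (N+2)-block of x is admissible
      have hblocks : ∀ k : ℤ,
          Admissible X (List.ofFn fun j : Fin (N+2) => x (k + ((j:ℕ):ℤ))) := by
        intro k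
        by_contra hna
        refine hx _ ⟨by simp, hna⟩ ⟨k, fun j => ?_⟩
        rw [List.get_ofFn]
        rfl
      -- all long blocks are admissible, by induction using claim A
      have hQ : ∀ L : ℕ, ∀ k : ℤ,
          Admissible X (List.ofFn fun j : Fin (N+2+L) => x (k + ((j:ℕ):ℤ))) := by
        intro L
        induction L with
        | zero => exact hblocks
        | succ L ih =>
          intro k
          obtain ⟨y, hyX, hy⟩ := admissible_place_ofFn hX _ (ih k) (1 - ((N+2+L : ℕ) : ℤ))
          obtain ⟨z, hzX, hz⟩ :=
            admissible_place_ofFn hX _ (hblocks (k + (L:ℤ) + 1)) (-(N:ℤ))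
          set u : ℕ → A := fun n => y (-(n:ℤ)) with hudef
          set u' : ℕ → A := fun n => z (-(n:ℤ)) with hu'def
          have hagree : ∀ n ≤ N, u n = u' n := by
            intro n hn
            have e1 := hy (N+1+L-n) (by omega)
            rw [show (1 - ((N+2+L:ℕ):ℤ) + ((N+1+L-n : ℕ):ℤ)) = -(n:ℤ) by omega] at e1
            have e2 := hz (N-n) (by omega)
            rw [show (-(N:ℤ) + ((N-n:ℕ):ℤ)) = -(n:ℤ) by omega] at e2
            show y (-(n:ℤ)) = z (-(n:ℤ))
            rw [e1, e2]
            simp only [Fin.val_mk]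
            congr 1
            omega
          have hσu' : x (k + ((N+2+L:ℕ):ℤ)) ∈ Gamma1 X u' := by
            refine ⟨z, hzX, fun n => rfl, ?_⟩
            have e3 := hz (N+1) (by omega)
            rw [show (-(N:ℤ) + ((N+1:ℕ):ℤ)) = 1 by omega] at e3
            rw [e3]
            simp only [Fin.val_mk]
            congr 1
            omega
          have hσu : x (k + ((N+2+L:ℕ):ℤ)) ∈ Gamma1 X u :=
            hN u ⟨y, hyX, fun n => rfl⟩ u' ⟨z, hzX, fun n => rfl⟩ hagree hσu'
          obtain ⟨w, hwX, hwu, hw1⟩ := hσu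
          refine admissible_ofFn_iff _ w hwX (1 - ((N+2+L:ℕ):ℤ)) ?_
          intro j hj
          by_cases hjlt : j < N+2+L
          · have h1 := hwu (N+1+L-j)
            rw [show (-(((N+1+L-j:ℕ)):ℤ)) = 1 - ((N+2+L:ℕ):ℤ) + j by omega] at h1
            rw [h1]
            show y (-(((N+1+L-j:ℕ)):ℤ)) = x (k + (j:ℤ))
            have h2 := hy j hjlt
            rw [show (1 - ((N+2+L:ℕ):ℤ) + (j:ℤ)) = -(((N+1+L-j : ℕ)):ℤ) by omega] at h2
            exact h2
          · have hj' : j = N+2+L := by omega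
            rw [show (1 - ((N+2+L:ℕ):ℤ) + (j:ℤ)) = 1 by omega, hw1]
            simp only [Fin.val_mk]
            congr 1
            omega
      -- approximate x by points of X and use closedness
      have hY : ∀ m : ℕ, ∃ y ∈ X, ∀ i : ℤ, -(m:ℤ) ≤ i → i ≤ (m:ℤ) → y i = x i := by
        intro m
        obtain ⟨y, hyX, hy⟩ := admissible_place_ofFn hX _ (hQ (2*m) (-(m:ℤ))) (-(m:ℤ))
        refine ⟨y, hyX, fun i hi1 hi2 => ?_⟩
        have hj : (i + m).toNat < N+2+2*m := by omega
        have h3 := hy (i + m).toNat hj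
        rw [show (-(m:ℤ) + (((i+m).toNat : ℕ) : ℤ)) = i by omega] at h3
        exact h3
      choose y hyX hy using hY
      have htd : Filter.Tendsto y Filter.atTop (nhds x) := by
        rw [tendsto_pi_nhds]
        intro i
        apply tendsto_nhds_of_eventually_eq
        filter_upwards [Filter.eventually_ge_atTop i.natAbs] with m hm
        exact hy m i (by omega) (by omega)
      exact hX.2.1.mem_of_tendsto htd (Filter.Eventually.of_forall hyX)
end

section
/- Let X ⊆ Σ^ℤ be a subshift such that the set D⁻ = {x⁻ ∈ X⁻ : Δ₁⁺(x⁻) ≠ ∅} is nonempty. Then there exists a continuous map g : D⁻ × Σ → [0,1] such that for every x⁻ ∈ D⁻: g(x⁻,σ) = 0 for all σ ∉ Δ₁⁺(x⁻), g(x⁻,σ) > 0 for all σ ∈ Δ₁⁺(x⁻), and Σ_{σ ∈ Σ} g(x⁻,σ) = 1. -/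
open Set Filter Topology

section GAux

variable {A : Type*} [Fintype A] [TopologicalSpace A] [DiscreteTopology A]

open Classical in
/-- One term of the geometric series measuring membership in `ω₁⁺`. -/
noncomputable def termF (X : Set (ℤ → A)) (σ : A) (n : ℕ) (u : ℕ → A) : ℝ :=
  if σ ∈ omega1 X (lastWord u n) then ((1 : ℝ) / 2) ^ n else 0

/-- The weight function `f(σ, u) = ∑ₙ 2⁻ⁿ [σ ∈ ω₁⁺(lastWord u n)]`. -/
noncomputable def fF (X : Set (ℤ → A)) (σ : A) (u : ℕ → A) : ℝ :=
  ∑' n : ℕ, termF X σ n u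

lemma termF_nonneg (X : Set (ℤ → A)) (σ : A) (n : ℕ) (u : ℕ → A) :
    0 ≤ termF X σ n u := by
  unfold termF; split <;> positivity

lemma termF_le (X : Set (ℤ → A)) (σ : A) (n : ℕ) (u : ℕ → A) :
    termF X σ n u ≤ ((1 : ℝ) / 2) ^ n := by
  unfold termF; split
  · exact le_rfl
  · positivity

lemma summable_termF (X : Set (ℤ → A)) (σ : A) (u : ℕ → A) :
    Summable fun n : ℕ => termF X σ n u :=
  Summable.of_nonneg_of_le (fun n => termF_nonneg X σ n u) (fun n => termF_le X σ n u)
    summable_geometric_two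

lemma fF_nonneg (X : Set (ℤ → A)) (σ : A) (u : ℕ → A) : 0 ≤ fF X σ u :=
  tsum_nonneg fun n => termF_nonneg X σ n u

lemma continuous_pair_termF (X : Set (ℤ → A)) (n : ℕ) :
    Continuous fun p : (ℕ → A) × A => termF X p.2 n p.1 := by
  classical
  have h1 : Continuous fun p : (ℕ → A) × A =>
      ((fun j : Fin (n + 1) => p.1 (n - (j : ℕ)), p.2) : (Fin (n + 1) → A) × A) := by
    refine Continuous.prodMk ?_ continuous_snd
    exact continuous_pi fun j => (continuous_apply _).comp continuous_fst
  have h2 : Continuous fun q : (Fin (n + 1) → A) × A =>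
      (if q.2 ∈ omega1 X (List.ofFn q.1) then ((1 : ℝ) / 2) ^ n else 0) :=
    continuous_of_discreteTopology
  have := h2.comp h1
  convert this using 1
  rfl

lemma continuous_pair_fF (X : Set (ℤ → A)) :
    Continuous fun p : (ℕ → A) × A => fF X p.2 p.1 := by
  refine continuous_tsum (fun n => continuous_pair_termF X n) summable_geometric_two ?_
  intro n p
  rw [Real.norm_eq_abs, abs_of_nonneg (termF_nonneg X p.2 n p.1)]
  exact termF_le X p.2 n p.1

lemma fF_pos (X : Set (ℤ → A)) {σ : A} {u : ℕ → A} (h : σ ∈ Delta1 X u) :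
    0 < fF X σ u := by
  classical
  rcases Set.mem_iUnion.mp h with ⟨n, hn⟩
  refine Summable.tsum_pos (summable_termF X σ u) (fun m => termF_nonneg X σ m u) n ?_
  unfold termF
  rw [if_pos hn]
  positivity

lemma fF_eq_zero (X : Set (ℤ → A)) {σ : A} {u : ℕ → A} (h : σ ∉ Delta1 X u) :
    fF X σ u = 0 := by
  classical
  have : ∀ n : ℕ, termF X σ n u = 0 := by
    intro n
    unfold termF
    rw [if_neg fun hn => h (Set.mem_iUnion.mpr ⟨n, hn⟩)]
  simp [fF, this]

end GAux

/-- Lemma 2.3.  If `D⁻ = {x⁻ ∈ X⁻ : Δ₁⁺(x⁻) ≠ ∅}` is nonempty, then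
there is a continuous `g : D⁻ × Σ → [0,1]` vanishing exactly off `Δ₁⁺` and summing to
`1`. -/
theorem stmt2 {A : Type*} [Fintype A] [Nonempty A] [TopologicalSpace A] [DiscreteTopology A]
    (X : Set (ℤ → A)) (hX : IsSubshift X)
    (hne : {u | u ∈ Xminus X ∧ (Delta1 X u).Nonempty}.Nonempty) :
    ∃ g : (ℕ → A) → A → ℝ,
      ContinuousOn (fun p : (ℕ → A) × A => g p.1 p.2)
        {p : (ℕ → A) × A | p.1 ∈ Xminus X ∧ (Delta1 X p.1).Nonempty} ∧
      ∀ u, u ∈ Xminus X → (Delta1 X u).Nonempty →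
        (∀ σ : A, g u σ ∈ Set.Icc (0 : ℝ) 1) ∧
        (∀ σ ∉ Delta1 X u, g u σ = 0) ∧
        (∀ σ ∈ Delta1 X u, 0 < g u σ) ∧
        ∑ σ : A, g u σ = 1 := by
  
  classical
  refine ⟨fun u σ => fF X σ u / ∑ τ : A, fF X τ u, ?_, ?_⟩
  · have hnum : Continuous fun p : (ℕ → A) × A => fF X p.2 p.1 := continuous_pair_fF X
    have hden : Continuous fun p : (ℕ → A) × A => ∑ τ : A, fF X τ p.1 := by
      refine continuous_finset_sum _ fun τ _ => ?_
      exact (continuous_pair_fF X).comp (continuous_fst.prodMk continuous_const)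
    refine hnum.continuousOn.div hden.continuousOn ?_
    rintro ⟨u, σ⟩ ⟨hu, σ0, hσ0⟩
    have hpos : 0 < ∑ τ : A, fF X τ u :=
      Finset.sum_pos' (fun τ _ => fF_nonneg X τ u) ⟨σ0, Finset.mem_univ _, fF_pos X hσ0⟩
    exact ne_of_gt hpos
  · intro u hu ⟨σ0, hσ0⟩
    have hpos : 0 < ∑ τ : A, fF X τ u :=
      Finset.sum_pos' (fun τ _ => fF_nonneg X τ u) ⟨σ0, Finset.mem_univ _, fF_pos X hσ0⟩
    refine ⟨fun σ => ⟨div_nonneg (fF_nonneg X σ u) hpos.le, ?_⟩, fun σ hσ => ?_, fun σ hσ => ?_, ?_⟩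
    · rw [div_le_one hpos]
      exact Finset.single_le_sum (fun τ _ => fF_nonneg X τ u) (Finset.mem_univ σ)
    · show fF X σ u / ∑ τ : A, fF X τ u = 0
      rw [fF_eq_zero X hσ, zero_div]
    · exact div_pos (fF_pos X hσ) hpos
    · show ∑ σ : A, fF X σ u / ∑ τ : A, fF X τ u = 1
      rw [← Finset.sum_div, div_self hpos.ne']
end

section
/- A subshift X ⊆ Σ^ℤ has a g-function if and only if X has property g. -/
open Set Filter Topology

section StmtThreeAux

open scoped Classical

variable {A : Type*}

lemma endsAtZero_lastWord_iff (u : ℕ → A) (x : ℤ → A) (n : ℕ) :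
    EndsAtZero x (lastWord u n) ↔ ∀ k ≤ n, x (-(k : ℤ)) = u k := by
  unfold EndsAtZero lastWord
  rw [Fin.forall_iff]
  simp only [List.length_ofFn, List.get_ofFn]
  constructor
  · intro h k hk
    have := h (n - k) (by omega)
    simp only [Fin.cast, Fin.val_mk] at this
    convert this using 2
    · push_cast [Nat.sub_sub_self hk]; ring_nf; omega
    · simp [Nat.sub_sub_self hk]
  · intro h j hj
    have := h (n - j) (by omega)
    simp only [Fin.cast, Fin.val_mk]
    convert this using 2
    push_cast [show (j:ℤ) ≤ n by exact_mod_cast Nat.lt_succ_iff.mp hj]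
    omega

lemma mem_omega1_iff (X : Set (ℤ → A)) (b : List A) (σ : A) :
    σ ∈ omega1 X b ↔ ∀ x ∈ X, EndsAtZero x b →
      ∃ x' ∈ X, (∀ i : ℤ, i ≤ 0 → x' i = x i) ∧ x' 1 = σ := by
  unfold omega1 OmegaWord
  simp only [Set.mem_setOf_eq]
  refine forall_congr' fun x => forall_congr' fun hx => forall_congr' fun he => ?_
  refine exists_congr fun x' => and_congr_right fun _ => and_congr_right fun _ => ?_
  constructor
  · intro h
    simpa using h ⟨0, by simp⟩
  · intro h j
    have hj : (j : ℕ) = 0 := by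
      have := j.2
      simp only [List.length_singleton] at this
      omega
    have hj' : j = ⟨0, by simp⟩ := Fin.ext hj
    subst hj'
    simpa using h

lemma omega1_lastWord_subset_Gamma1 {X : Set (ℤ → A)} {u : ℕ → A}
    (hu : u ∈ Xminus X) (n : ℕ) : omega1 X (lastWord u n) ⊆ Gamma1 X u := by
  obtain ⟨x, hxX, hxu⟩ := hu
  intro σ hσ
  rw [mem_omega1_iff] at hσ
  obtain ⟨x', hx'X, hagree, hx'1⟩ :=
    hσ x hxX ((endsAtZero_lastWord_iff u x n).2 fun k _ => (hxu k).symm)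
  refine ⟨x', hx'X, fun m => ?_, hx'1⟩
  rw [hagree _ (by omega : -(m:ℤ) ≤ 0)]
  exact (hxu m).symm

lemma lastWord_congr {u v : ℕ → A} {N : ℕ} (h : ∀ k ≤ N, v k = u k) {n : ℕ}
    (hn : n ≤ N) : lastWord v n = lastWord u n := by
  unfold lastWord
  congr 1
  funext j
  exact h _ (by omega)

noncomputable def gFun [Fintype A] (X : Set (ℤ → A)) : (ℕ → A) → A → ℝ := fun u σ =>
  if h : ∃ n, (omega1 X (lastWord u n)).Nonempty then
    if σ ∈ omega1 X (lastWord u (Nat.find h)) then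
      ((Set.toFinite (omega1 X (lastWord u (Nat.find h)))).toFinset.card : ℝ)⁻¹
    else 0
  else 0

lemma gFun_local [Fintype A] (X : Set (ℤ → A)) {u v : ℕ → A}
    (h : ∃ n, (omega1 X (lastWord u n)).Nonempty)
    (hv : ∀ k ≤ Nat.find h, v k = u k) : gFun X v = gFun X u := by
  have h' : ∃ n, (omega1 X (lastWord v n)).Nonempty :=
    ⟨Nat.find h, by rw [lastWord_congr hv le_rfl]; exact Nat.find_spec h⟩
  have h1 : Nat.find h' ≤ Nat.find h :=
    Nat.find_le (by rw [lastWord_congr hv le_rfl]; exact Nat.find_spec h)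
  have hfind : Nat.find h' = Nat.find h := by
    refine le_antisymm h1 (Nat.find_le ?_)
    rw [← lastWord_congr hv h1]
    exact Nat.find_spec h'
  funext σ
  simp only [gFun, dif_pos h, dif_pos h', hfind, lastWord_congr hv le_rfl]

lemma sum_indicator_toFinset [Fintype A] (s : Set A) (f : A → ℝ) :
    ∑ σ : A, s.indicator f σ = ∑ σ ∈ (Set.toFinite s).toFinset, f σ := by
  have he : ∀ σ : A, s.indicator f σ = if σ ∈ (Set.toFinite s).toFinset then f σ else 0 := by
    intro σ
    rw [Set.indicator_apply]
    exact if_congr (Set.Finite.mem_toFinset _).symm rfl rfl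
  rw [Finset.sum_congr rfl fun σ _ => he σ, Finset.sum_ite_mem, Finset.univ_inter]

end StmtThreeAux

section StmtThreeRev

open scoped Classical
open Filter Topology

variable {A : Type*}

lemma gFun_isGFunction [Fintype A] [TopologicalSpace A] [DiscreteTopology A]
    (X : Set (ℤ → A)) (hg : PropertyG X) : IsGFunction X (gFun X) := by
  have hex : ∀ u ∈ Xminus X, ∃ n, (omega1 X (lastWord u n)).Nonempty := by
    intro u hu
    obtain ⟨σ, hσ⟩ := hg u hu
    rw [Delta1, Set.mem_iUnion] at hσ
    obtain ⟨n, hn⟩ := hσ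
    exact ⟨n, σ, hn⟩
  refine ⟨?_, ?_, ?_⟩
  · -- continuity
    intro p hp
    have h := hex p.1 hp.1
    set N := Nat.find h with hN
    have hev : ∀ᶠ q : (ℕ → A) × A in 𝓝 p, (∀ k ≤ N, q.1 k = p.1 k) ∧ q.2 = p.2 := by
      refine Filter.Eventually.and ?_ ?_
      · have := (Filter.eventually_all_finite (Set.finite_Iic N)
            (l := 𝓝 p) (p := fun k (q : (ℕ → A) × A) => q.1 k = p.1 k)).2 ?_
        · simpa [Set.mem_Iic] using this
        · intro k _
          have hopen : IsOpen {q : (ℕ → A) × A | q.1 k = p.1 k} := by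
            have : {q : (ℕ → A) × A | q.1 k = p.1 k}
                = (fun q : (ℕ → A) × A => q.1 k) ⁻¹' {p.1 k} := rfl
            rw [this]
            exact ((continuous_apply k).comp continuous_fst).isOpen_preimage _ (isOpen_discrete _)
          exact hopen.mem_nhds rfl
      · have hopen : IsOpen {q : (ℕ → A) × A | q.2 = p.2} := by
          have : {q : (ℕ → A) × A | q.2 = p.2} = Prod.snd ⁻¹' {p.2} := rfl
          rw [this]
          exact continuous_snd.isOpen_preimage _ (isOpen_discrete _)
        exact hopen.mem_nhds rfl
    apply ContinuousAt.continuousWithinAt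
    apply Filter.EventuallyEq.continuousAt (y := gFun X p.1 p.2)
    filter_upwards [hev] with q hq
    rw [show gFun X q.1 = gFun X p.1 from gFun_local X h hq.1, hq.2]
  · -- values in [0,1]
    intro u hu σ _
    unfold gFun
    split_ifs with h1 h2
    · have hne : (omega1 X (lastWord u (Nat.find h1))).Nonempty := Nat.find_spec h1
      have hcard : 0 < (Set.toFinite (omega1 X (lastWord u (Nat.find h1)))).toFinset.card := by
        rw [Finset.card_pos, Set.Finite.toFinset_nonempty]
        exact hne
      constructor
      · positivity
      · rw [inv_le_one_iff₀]
        right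
        exact_mod_cast hcard
    · exact ⟨le_rfl, zero_le_one⟩
    · exact ⟨le_rfl, zero_le_one⟩
  · -- normalization
    intro u hu
    have h := hex u hu
    have hsub : omega1 X (lastWord u (Nat.find h)) ⊆ Gamma1 X u :=
      omega1_lastWord_subset_Gamma1 hu _
    have hzero : ∀ σ ∉ Gamma1 X u, gFun X u σ = 0 := by
      intro σ hσ
      unfold gFun
      rw [dif_pos h, if_neg fun hmem => hσ (hsub hmem)]
    have h1 : ∑ σ : A, (Gamma1 X u).indicator (gFun X u) σ = ∑ σ : A, gFun X u σ := by
      refine Finset.sum_congr rfl fun σ _ => ?_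
      by_cases hσ : σ ∈ Gamma1 X u
      · rw [Set.indicator_of_mem hσ]
      · rw [Set.indicator_of_notMem hσ, hzero σ hσ]
    rw [h1]
    unfold gFun
    simp only [dif_pos h]
    set s := (Set.toFinite (omega1 X (lastWord u (Nat.find h)))).toFinset with hs
    have hcard : 0 < s.card := by
      rw [hs, Finset.card_pos, Set.Finite.toFinset_nonempty]
      exact Nat.find_spec h
    have hmem : ∀ σ : A, (σ ∈ omega1 X (lastWord u (Nat.find h))) ↔ σ ∈ s := fun σ =>
      (Set.Finite.mem_toFinset _).symm
    calc ∑ σ : A, (if σ ∈ omega1 X (lastWord u (Nat.find h)) then (s.card : ℝ)⁻¹ else 0)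
        = ∑ σ : A, (if σ ∈ s then (s.card : ℝ)⁻¹ else 0) :=
          Finset.sum_congr rfl fun σ _ => if_congr (hmem σ) rfl rfl
      _ = ∑ σ ∈ Finset.univ ∩ s, (s.card : ℝ)⁻¹ := Finset.sum_ite_mem _ _ _
      _ = s.card • (s.card : ℝ)⁻¹ := by rw [Finset.univ_inter, Finset.sum_const]
      _ = 1 := by
          rw [nsmul_eq_mul]
          exact mul_inv_cancel₀ (by exact_mod_cast hcard.ne')

end StmtThreeRev

section StmtThreeFwd

open scoped Classical
open Filter Topology

variable {A : Type*}

lemma gFunction_propertyG [Fintype A] [Nonempty A] [TopologicalSpace A] [DiscreteTopology A]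
    (X : Set (ℤ → A)) (hclosed : IsClosed X) (g : (ℕ → A) → A → ℝ)
    (hg : IsGFunction X g) : PropertyG X := by
  obtain ⟨hcont, hIcc, hsum⟩ := hg
  intro u hu
  by_contra hΔ
  rw [Set.not_nonempty_iff_eq_empty] at hΔ
  have hnot : ∀ (σ : A) (n : ℕ), σ ∉ omega1 X (lastWord u n) := by
    intro σ n hn
    have : σ ∈ Delta1 X u := Set.mem_iUnion.2 ⟨n, hn⟩
    rw [hΔ] at this
    exact this
  have hind_nonneg : ∀ v ∈ Xminus X, ∀ σ : A, 0 ≤ (Gamma1 X v).indicator (g v) σ := by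
    intro v hv σ
    by_cases hσ : σ ∈ Gamma1 X v
    · rw [Set.indicator_of_mem hσ]; exact (hIcc v hv σ hσ).1
    · rw [Set.indicator_of_notMem hσ]
  -- Step 1: find σ₀ with large g-value
  set c : ℝ := (Fintype.card A : ℝ)⁻¹ with hc
  have hcpos : 0 < c := by
    rw [hc]
    exact inv_pos.2 (by exact_mod_cast Fintype.card_pos)
  have hσ₀ : ∃ σ₀ ∈ Gamma1 X u, c ≤ g u σ₀ := by
    by_contra hcon
    push_neg at hcon
    have hlt : ∑ σ : A, (Gamma1 X u).indicator (g u) σ < ∑ _σ : A, c := by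
      refine Finset.sum_lt_sum_of_nonempty Finset.univ_nonempty fun σ _ => ?_
      by_cases hσ : σ ∈ Gamma1 X u
      · rw [Set.indicator_of_mem hσ]; exact hcon σ hσ
      · rw [Set.indicator_of_notMem hσ]; exact hcpos
    rw [hsum u hu, Finset.sum_const, Finset.card_univ, nsmul_eq_mul, hc,
      mul_inv_cancel₀ (by exact_mod_cast Fintype.card_pos.ne' : (Fintype.card A : ℝ) ≠ 0)] at hlt
    exact lt_irrefl _ hlt
  obtain ⟨σ₀, hσ₀Γ, hσ₀c⟩ := hσ₀
  -- Step 2: witnesses that σ₀ ∉ ω₁⁺(lastWord u n)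
  have hseq : ∀ n : ℕ, ∃ x ∈ X, EndsAtZero x (lastWord u n) ∧
      ∀ x' ∈ X, (∀ i : ℤ, i ≤ 0 → x' i = x i) → x' 1 ≠ σ₀ := by
    intro n
    have h := hnot σ₀ n
    rw [mem_omega1_iff] at h
    push_neg at h
    exact h
  choose v hvX hvEnds hvNo using hseq
  set w : ℕ → ℕ → A := fun n k => v n (-(k : ℤ)) with hw
  have hwX : ∀ n, w n ∈ Xminus X := fun n => ⟨v n, hvX n, fun _ => rfl⟩
  have hwu : ∀ n, ∀ k ≤ n, w n k = u k := fun n k hk =>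
    (endsAtZero_lastWord_iff u (v n) n).1 (hvEnds n) k hk
  have hwσ₀ : ∀ n, σ₀ ∉ Gamma1 X (w n) := by
    intro n hmem
    obtain ⟨x', hx'X, hx'w, hx'1⟩ := hmem
    refine hvNo n x' hx'X ?_ hx'1
    intro i hi
    have h1 : x' (-(((-i).toNat : ℕ) : ℤ)) = w n (-i).toNat := hx'w _
    have h2 : ((((-i).toNat : ℕ)) : ℤ) = -i := Int.toNat_of_nonneg (by omega)
    rw [h2, neg_neg] at h1
    rw [h1, hw]
    simp only
    rw [h2, neg_neg]
  -- Step 3: pigeonhole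
  obtain ⟨Γ, hΓinf⟩ : ∃ Γ : Set A, {n | Gamma1 X (w n) = Γ}.Infinite := by
    obtain ⟨Γ, hΓ⟩ := Finite.exists_infinite_fiber fun n => Gamma1 X (w n)
    exact ⟨Γ, Set.infinite_coe_iff.1 hΓ⟩
  set S := {n | Gamma1 X (w n) = Γ} with hS
  have hσ₀Γ' : σ₀ ∉ Γ := by
    obtain ⟨n, hn⟩ := hΓinf.nonempty
    rw [← hn]
    exact hwσ₀ n
  -- Step 4: Γ ⊆ Γ₁⁺(u) by compactness
  have hΓsub : Γ ⊆ Gamma1 X u := by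
    intro τ hτ
    set K : ℕ → Set (ℤ → A) := fun m =>
      X ∩ {x | ∀ k ≤ m, x (-(k : ℤ)) = u k} ∩ {x | x 1 = τ} with hK
    have hKcl : ∀ m, IsClosed (K m) := by
      intro m
      refine IsClosed.inter (IsClosed.inter hclosed ?_) ?_
      · have he : {x : ℤ → A | ∀ k ≤ m, x (-(k : ℤ)) = u k}
            = ⋂ k ∈ Set.Iic m, {x : ℤ → A | x (-(k : ℤ)) = u k} := by
          ext x
          simp [Set.mem_iInter, Set.mem_Iic]
        rw [he]
        exact isClosed_biInter fun k _ =>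
          isClosed_eq (continuous_apply _) continuous_const
      · exact isClosed_eq (continuous_apply _) continuous_const
    have hKne : ∀ m, (K m).Nonempty := by
      intro m
      obtain ⟨n, hnS, hmn⟩ := hΓinf.exists_gt m
      have hτn : τ ∈ Gamma1 X (w n) := by
        rw [show Gamma1 X (w n) = Γ from hnS]
        exact hτ
      obtain ⟨x', hx'X, hx'w, hx'1⟩ := hτn
      refine ⟨x', ⟨hx'X, fun k hk => ?_⟩, hx'1⟩
      rw [hx'w k]
      exact hwu n k (by omega)
    have hKanti : ∀ m, K (m + 1) ⊆ K m := fun m x hx =>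
      ⟨⟨hx.1.1, fun k hk => hx.1.2 k (by omega)⟩, hx.2⟩
    have hne : (⋂ m, K m).Nonempty :=
      IsCompact.nonempty_iInter_of_sequence_nonempty_isCompact_isClosed K hKanti hKne
        (hKcl 0).isCompact hKcl
    obtain ⟨x, hx⟩ := hne
    rw [Set.mem_iInter] at hx
    exact ⟨x, (hx 0).1.1, fun k => (hx k).1.2 k le_rfl, (hx 0).2⟩
  -- Step 5: the filter
  set F : Filter ℕ := atTop ⊓ 𝓟 S with hF
  have hFne : F.NeBot := by
    rw [hF, Filter.inf_principal_neBot_iff]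
    intro U hU
    obtain ⟨m, hm⟩ := Filter.mem_atTop_sets.1 hU
    obtain ⟨n, hnS, hmn⟩ := hΓinf.exists_gt m
    exact ⟨n, hm n hmn.le, hnS⟩
  have hSF : S ∈ F := by
    rw [hF]
    exact Filter.mem_inf_of_right (Filter.mem_principal_self S)
  -- Step 6: convergence
  have hwtend : Tendsto w atTop (𝓝 u) := by
    rw [tendsto_pi_nhds]
    intro k
    refine Filter.Tendsto.congr' ?_ tendsto_const_nhds
    filter_upwards [Filter.eventually_ge_atTop k] with n hn
    exact (hwu n k hn).symm
  set Γf : Finset A := (Set.toFinite Γ).toFinset with hΓf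
  have htend : Tendsto (fun n => ∑ τ ∈ Γf, g (w n) τ) F (𝓝 (∑ τ ∈ Γf, g u τ)) := by
    refine tendsto_finset_sum _ fun τ hτf => ?_
    have hτΓ : τ ∈ Γ := (Set.Finite.mem_toFinset _).1 hτf
    have hmem : ((u, τ) : (ℕ → A) × A)
        ∈ {p : (ℕ → A) × A | p.1 ∈ Xminus X ∧ p.2 ∈ Gamma1 X p.1} := ⟨hu, hΓsub hτΓ⟩
    have hctd := (hcont (u, τ) hmem).tendsto
    have hpt : Tendsto (fun n => ((w n, τ) : (ℕ → A) × A)) F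
        (𝓝[{p : (ℕ → A) × A | p.1 ∈ Xminus X ∧ p.2 ∈ Gamma1 X p.1}] (u, τ)) := by
      rw [tendsto_nhdsWithin_iff]
      constructor
      · exact (hwtend.mono_left inf_le_left).prodMk_nhds tendsto_const_nhds
      · filter_upwards [hSF] with n hn
        exact ⟨hwX n, by rw [show Gamma1 X (w n) = Γ from hn]; exact hτΓ⟩
    exact hctd.comp hpt
  have hconst : ∀ n ∈ S, ∑ τ ∈ Γf, g (w n) τ = 1 := by
    intro n hn
    have h := hsum (w n) (hwX n)
    rw [show Gamma1 X (w n) = Γ from hn, sum_indicator_toFinset] at h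
    exact h
  have hsum1 : ∑ τ ∈ Γf, g u τ = 1 := by
    refine tendsto_nhds_unique htend ?_
    refine Filter.Tendsto.congr' ?_ tendsto_const_nhds
    filter_upwards [hSF] with n hn
    exact (hconst n hn).symm
  -- Step 8: contradiction
  have hσ₀f : σ₀ ∉ Γf := fun hmem => hσ₀Γ' ((Set.Finite.mem_toFinset _).1 hmem)
  have hge : ∑ σ ∈ insert σ₀ Γf, (Gamma1 X u).indicator (g u) σ
      ≤ ∑ σ : A, (Gamma1 X u).indicator (g u) σ :=
    Finset.sum_le_sum_of_subset_of_nonneg (Finset.subset_univ _)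
      fun σ _ _ => hind_nonneg u hu σ
  rw [Finset.sum_insert hσ₀f, hsum u hu, Set.indicator_of_mem hσ₀Γ,
    Finset.sum_congr rfl fun σ hσ =>
      Set.indicator_of_mem (hΓsub ((Set.Finite.mem_toFinset _).1 hσ)) (g u), hsum1] at hge
  linarith

end StmtThreeFwd

/-- Theorem 2.4, (a) ⟺ (b).  A subshift has a g-function if and only
if it has property g. -/
theorem stmt3 {A : Type*} [Fintype A] [Nonempty A] [TopologicalSpace A] [DiscreteTopology A]
    (X : Set (ℤ → A)) (hX : IsSubshift X) :
    (∃ g : (ℕ → A) → A → ℝ, IsGFunction X g) ↔ PropertyG X := by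
  obtain ⟨-, hclosed, -⟩ := hX
  constructor
  · rintro ⟨g, hg⟩
    exact gFunction_propertyG X hclosed g hg
  · intro hg
    exact ⟨gFun X, gFun_isGFunction X hg⟩
end

section
/- A subshift X ⊆ Σ^ℤ has property (D) if and only if for all admissible words a and c of X such that the concatenation ac is admissible, there exists an admissible word b of X such that ba is admissible and ac ∈ ω⁺(b). -/
open Set Filter Topology

section Helpers

variable {A : Type*} {X : Set (ℤ → A)}

lemma shift_mem (hS : shiftMap '' X = X) {x : ℤ → A} (hx : x ∈ X) :
    ∀ m : ℤ, (fun i => x (i + m)) ∈ X := by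
  have fwd : ∀ y ∈ X, (fun i : ℤ => y (i + 1)) ∈ X := by
    intro y hy
    have : shiftMap y ∈ X := hS ▸ Set.mem_image_of_mem _ hy
    exact this
  have bwd : ∀ y ∈ X, (fun i : ℤ => y (i - 1)) ∈ X := by
    intro y hy
    rw [← hS] at hy
    obtain ⟨z, hz, hzy⟩ := hy
    have : (fun i : ℤ => y (i - 1)) = z := by
      funext i
      rw [← hzy]
      simp only [shiftMap]
      congr 1; ring
    rwa [this]
  intro m
  induction m using Int.induction_on with
  | zero => simpa using hx
  | succ k ih =>
      have := fwd _ ih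
      convert this using 2 with i
      push_cast; ring
  | pred k ih =>
      have := bwd _ ih
      convert this using 2 with i
      push_cast; ring

lemma endsAtZero_of_occurs (hS : shiftMap '' X = X) {x : ℤ → A} (hx : x ∈ X)
    {w : List A} (hw : Occurs w x) : ∃ y ∈ X, EndsAtZero y w := by
  obtain ⟨i, hi⟩ := hw
  refine ⟨fun k => x (k + (i + (w.length : ℤ) - 1)), shift_mem hS hx _, ?_⟩
  intro j
  have := hi j
  rw [← this]
  congr 1
  have : (j : ℕ) < w.length := j.2
  push_cast
  ring

lemma occurs_of_endsAtZero {x : ℤ → A} {w : List A} (h : EndsAtZero x w) :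
    Occurs w x := by
  refine ⟨1 - (w.length : ℤ), ?_⟩
  intro j
  have := h j
  rw [← this]
  congr 1
  ring

lemma admissible_iff_endsAtZero (hS : shiftMap '' X = X) {w : List A} :
    Admissible X w ↔ ∃ x ∈ X, EndsAtZero x w := by
  constructor
  · rintro ⟨x, hx, hw⟩
    exact endsAtZero_of_occurs hS hx hw
  · rintro ⟨x, hx, hw⟩
    exact ⟨x, hx, occurs_of_endsAtZero hw⟩

lemma endsAtZero_suffix {x : ℤ → A} {u v : List A} (h : EndsAtZero x (u ++ v)) :
    EndsAtZero x v := by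
  intro j
  have hj : (u.length + (j : ℕ)) < (u ++ v).length := by
    have := j.2; rw [List.length_append]; omega
  have h2 := h ⟨u.length + (j : ℕ), hj⟩
  simp only [List.get_eq_getElem] at h2 ⊢
  rw [List.getElem_append_right (by omega)] at h2
  have e1 : u.length + (j : ℕ) - u.length = (j : ℕ) := by omega
  simp only [e1] at h2
  rw [← h2]
  congr 1
  push_cast [List.length_append]
  ring

lemma omegaWord_mono {u v w : List A} (h : OmegaWord X v w) :
    OmegaWord X (u ++ v) w := by
  intro x hx hends
  exact h x hx (endsAtZero_suffix hends)

lemma omegaWord_nil (b : List A) : OmegaWord X b [] := by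
  intro x hx _
  exact ⟨x, hx, fun i _ => rfl, fun j => absurd j.2 (by simp)⟩

end Helpers


section Helpers2

variable {A : Type*} {X : Set (ℤ → A)}

lemma shift_mem' (hS : shiftMap '' X = X) {x : ℤ → A} (hx : x ∈ X) (m : ℤ) :
    (fun i => x (i - m)) ∈ X := by
  have := shift_mem hS hx (-m)
  simpa [sub_eq_add_neg] using this

lemma endsAtZero_shift_left {y : ℤ → A} {B u : List A} (h : EndsAtZero y (B ++ u)) :
    EndsAtZero (fun i => y (i - (u.length : ℤ))) B := by
  intro j
  have hj : (j : ℕ) < (B ++ u).length := by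
    have := j.2; rw [List.length_append]; omega
  have h2 := h ⟨(j : ℕ), hj⟩
  simp only [List.get_eq_getElem] at h2 ⊢
  rw [List.getElem_append_left j.2] at h2
  rw [← h2]
  congr 1
  push_cast [List.length_append]
  ring

lemma endsAtZero_append {x x' : ℤ → A} {B u : List A}
    (hB : EndsAtZero x B) (hagree : ∀ i : ℤ, i ≤ 0 → x' i = x i)
    (hu : ∀ j : Fin u.length, x' (((j : ℕ) : ℤ) + 1) = u.get j) :
    EndsAtZero (fun i => x' (i + (u.length : ℤ))) (B ++ u) := by
  intro j
  obtain ⟨jv, hjv⟩ := j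
  have hj2 : jv < B.length + u.length := by
    have := hjv; rw [List.length_append] at this; exact this
  show x' ((jv : ℤ) - (((B ++ u).length : ℤ) - 1) + (u.length : ℤ)) = (B ++ u).get ⟨jv, hjv⟩
  simp only [List.get_eq_getElem]
  by_cases hc : jv < B.length
  · rw [List.getElem_append_left hc]
    have h2 := hB ⟨jv, hc⟩
    simp only [List.get_eq_getElem] at h2
    have harg : (jv : ℤ) - (((B ++ u).length : ℤ) - 1) + (u.length : ℤ)
        = (jv : ℤ) - ((B.length : ℤ) - 1) := by
      push_cast [List.length_append]; ring
    rw [harg, hagree _ (by omega)]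
    exact h2
  · rw [List.getElem_append_right (le_of_not_gt hc)]
    have hk : jv - B.length < u.length := by omega
    have h2 := hu ⟨jv - B.length, hk⟩
    simp only [List.get_eq_getElem] at h2
    rw [← h2]
    congr 1
    push_cast [List.length_append]
    omega

lemma endsAtZero_value {x : ℤ → A} {B u : List A} (h : EndsAtZero x (B ++ u))
    {k : ℕ} (hk : k < u.length) :
    x ((k : ℤ) + 1 - (u.length : ℤ)) = u.get ⟨k, hk⟩ := by
  have hj : B.length + k < (B ++ u).length := by rw [List.length_append]; omega
  have h2 := h ⟨B.length + k, hj⟩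
  simp only [List.get_eq_getElem] at h2 ⊢
  rw [List.getElem_append_right (by omega)] at h2
  have e1 : B.length + k - B.length = k := by omega
  simp only [e1] at h2
  rw [← h2]
  congr 1
  rw [List.length_append]
  push_cast
  ring

lemma omegaWord_snoc (hS : shiftMap '' X = X) {b u : List A} {σ : A}
    (h1 : OmegaWord X b u) (h2 : OmegaWord X (b ++ u) [σ]) :
    OmegaWord X b (u ++ [σ]) := by
  intro x hx hends
  obtain ⟨x', hx', hagree, hu⟩ := h1 x hx hends
  have hyX : (fun i => x' (i + (u.length : ℤ))) ∈ X := shift_mem hS hx' _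
  have hyends : EndsAtZero (fun i => x' (i + (u.length : ℤ))) (b ++ u) :=
    endsAtZero_append hends hagree hu
  obtain ⟨y', hy', hyagree, hσ⟩ := h2 _ hyX hyends
  refine ⟨fun i => y' (i - (u.length : ℤ)), shift_mem' hS hy' _, ?_, ?_⟩
  · intro i hi
    show y' (i - (u.length : ℤ)) = x i
    have e1 : y' (i - (u.length : ℤ)) = x' (i - (u.length : ℤ) + (u.length : ℤ)) :=
      hyagree _ (by omega)
    rw [e1]
    have e2 : i - (u.length : ℤ) + (u.length : ℤ) = i := by ring
    rw [e2]
    exact hagree i hi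
  · intro j
    obtain ⟨jv, hjv⟩ := j
    have hj2 : jv < u.length + 1 := by
      have := hjv; rw [List.length_append, List.length_singleton] at this; exact this
    show y' ((jv : ℤ) + 1 - (u.length : ℤ)) = (u ++ [σ]).get ⟨jv, hjv⟩
    simp only [List.get_eq_getElem]
    by_cases hc : jv < u.length
    · rw [List.getElem_append_left hc]
      have e1 : y' ((jv : ℤ) + 1 - (u.length : ℤ))
          = x' (((jv : ℤ) + 1 - (u.length : ℤ)) + (u.length : ℤ)) :=
        hyagree _ (by omega)
      have e2 : ((jv : ℤ) + 1 - (u.length : ℤ)) + (u.length : ℤ) = (jv : ℤ) + 1 := by ring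
      rw [e1, e2]
      have := hu ⟨jv, hc⟩
      simpa using this
    · have hje : jv = u.length := by omega
      rw [List.getElem_append_right (le_of_not_gt hc)]
      have hσ0 : y' 1 = σ := by
        have := hσ ⟨0, by simp⟩
        simpa using this
      have e3 : (jv : ℤ) + 1 - (u.length : ℤ) = (1 : ℤ) := by
        rw [hje]; push_cast; ring
      rw [e3, hσ0]
      simp [hje]

lemma omegaWord_shift (hS : shiftMap '' X = X) {B u v : List A}
    (h : OmegaWord X B (u ++ v)) : OmegaWord X (B ++ u) v := by
  intro x hx hends
  have hyX : (fun i => x (i - (u.length : ℤ))) ∈ X := shift_mem' hS hx _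
  have hyB : EndsAtZero (fun i => x (i - (u.length : ℤ))) B := endsAtZero_shift_left hends
  obtain ⟨y', hy', hagree, hw⟩ := h _ hyX hyB
  refine ⟨fun i => y' (i + (u.length : ℤ)), shift_mem hS hy' _, ?_, ?_⟩
  · intro i hi
    show y' (i + (u.length : ℤ)) = x i
    by_cases hc : i + (u.length : ℤ) ≤ 0
    · have e1 : y' (i + (u.length : ℤ)) = x (i + (u.length : ℤ) - (u.length : ℤ)) :=
        hagree _ hc
      rw [e1]
      congr 1; ring
    · push_neg at hc
      set k : ℕ := (i + (u.length : ℤ) - 1).toNat with hkdef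
      have hk1 : (k : ℤ) = i + (u.length : ℤ) - 1 := by
        rw [hkdef]; rw [Int.toNat_of_nonneg (by omega)]
      have hku : k < u.length := by omega
      have hval := hw ⟨k, by rw [List.length_append]; omega⟩
      simp only [List.get_eq_getElem] at hval
      rw [List.getElem_append_left hku] at hval
      have e2 : (k : ℤ) + 1 = i + (u.length : ℤ) := by omega
      rw [e2] at hval
      rw [hval]
      have hval2 := endsAtZero_value hends hku
      simp only [List.get_eq_getElem] at hval2
      rw [← hval2]
      congr 1
      omega
  · intro j
    obtain ⟨jv, hjv⟩ := j
    show y' ((jv : ℤ) + 1 + (u.length : ℤ)) = v.get ⟨jv, hjv⟩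
    have hj : u.length + jv < (u ++ v).length := by
      rw [List.length_append]; omega
    have hval := hw ⟨u.length + jv, hj⟩
    simp only [List.get_eq_getElem] at hval ⊢
    rw [List.getElem_append_right (by omega)] at hval
    have e1 : u.length + jv - u.length = jv := by omega
    simp only [e1] at hval
    rw [← hval]
    congr 1
    push_cast
    ring

end Helpers2


section Helpers3

variable {A : Type*} {X : Set (ℤ → A)}

lemma admissible_of_prefix {u v : List A} (h : Admissible X (u ++ v)) :
    Admissible X u := by
  obtain ⟨x, hx, i, hi⟩ := h
  refine ⟨x, hx, i, ?_⟩
  intro j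
  have hj : (j : ℕ) < (u ++ v).length := by
    have := j.2; rw [List.length_append]; omega
  have h2 := hi ⟨(j : ℕ), hj⟩
  simp only [List.get_eq_getElem] at h2 ⊢
  rwa [List.getElem_append_left j.2] at h2

lemma admissible_of_suffix {u v : List A} (h : Admissible X (u ++ v)) :
    Admissible X v := by
  obtain ⟨x, hx, i, hi⟩ := h
  refine ⟨x, hx, i + (u.length : ℤ), ?_⟩
  intro j
  have hj : u.length + (j : ℕ) < (u ++ v).length := by
    have := j.2; rw [List.length_append]; omega
  have h2 := hi ⟨u.length + (j : ℕ), hj⟩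
  simp only [List.get_eq_getElem] at h2 ⊢
  rw [List.getElem_append_right (by omega)] at h2
  have e1 : u.length + (j : ℕ) - u.length = (j : ℕ) := by omega
  simp only [e1] at h2
  rw [← h2]
  congr 1
  push_cast
  ring

lemma admissible_left_extend {w : List A} (h : Admissible X w) :
    ∃ τ : A, Admissible X (τ :: w) := by
  obtain ⟨x, hx, i, hi⟩ := h
  refine ⟨x (i - 1), x, hx, i - 1, ?_⟩
  intro j
  obtain ⟨jv, hjv⟩ := j
  match jv, hjv with
  | 0, hjv => simp
  | (k + 1), hjv =>
      have hk : k < w.length := by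
        have := hjv; simp only [List.length_cons] at this; omega
      have h2 := hi ⟨k, hk⟩
      simp only [List.get_eq_getElem] at h2 ⊢
      rw [List.getElem_cons_succ]
      rw [← h2]
      congr 1
      push_cast
      ring

lemma admissible_append_of_omega (hS : shiftMap '' X = X) {b w : List A}
    (hb : Admissible X b) (h : OmegaWord X b w) : Admissible X (b ++ w) := by
  rw [admissible_iff_endsAtZero hS] at hb ⊢
  obtain ⟨x, hx, hends⟩ := hb
  obtain ⟨x', hx', hagree, hw⟩ := h x hx hends
  exact ⟨_, shift_mem hS hx' _, endsAtZero_append hends hagree hw⟩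

lemma omegaWord_of_pointwise (hS : shiftMap '' X = X) {b w : List A}
    (h : ∀ k (hk : k < w.length), w.get ⟨k, hk⟩ ∈ omega1 X (b ++ w.take k)) :
    OmegaWord X b w := by
  have main : ∀ n, n ≤ w.length → OmegaWord X b (w.take n) := by
    intro n
    induction n with
    | zero => intro _; simpa using omegaWord_nil (X := X) b
    | succ m ih =>
        intro hm
        have hmw : m < w.length := by omega
        have step : OmegaWord X (b ++ w.take m) [w.get ⟨m, hmw⟩] := h m hmw
        have e : w.take (m + 1) = w.take m ++ [w.get ⟨m, hmw⟩] := by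
          rw [List.take_succ]
          simp [List.getElem?_eq_getElem hmw]
        rw [e]
        exact omegaWord_snoc hS (ih (by omega)) step
  have := main w.length le_rfl
  simpa using this

lemma lemmaA (hS : shiftMap '' X = X) (hD : PropertyD X) :
    ∀ w v : List A, v ≠ [] → Admissible X (v ++ w) →
      ∃ b : List A, Admissible X (b ++ v) ∧
        ∀ k (hk : k < w.length), w.get ⟨k, hk⟩ ∈ omega1 X (b ++ v ++ w.take k) := by
  intro w
  induction w using List.reverseRecOn with
  | nil =>
      intro v hv hadm
      exact ⟨[], by simpa using hadm, fun k hk => absurd hk (by simp)⟩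
  | append_singleton w' σ ih =>
      intro v hv hadm
      have hadm' : Admissible X ((v ++ w') ++ [σ]) := by
        rwa [List.append_assoc]
      obtain ⟨a, ha, haadm, hσ⟩ := hD (v ++ w') σ (by simp [hv]) hadm'
      obtain ⟨b', hb'adm, hb'⟩ := ih (a ++ v) (by simp [ha])
        (by rwa [← List.append_assoc] at haadm)
      refine ⟨b' ++ a, by rwa [List.append_assoc], ?_⟩
      intro k hk
      have hk2 : k < w'.length + 1 := by
        have := hk; rw [List.length_append, List.length_singleton] at this; exact this
      by_cases hc : k < w'.length
      · have h2 := hb' k hc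
        have etake : (w' ++ [σ]).take k = w'.take k := by
          rw [List.take_append_of_le_length (by omega)]
        have eget : (w' ++ [σ]).get ⟨k, hk⟩ = w'.get ⟨k, hc⟩ := by
          simp only [List.get_eq_getElem]
          exact List.getElem_append_left hc
        rw [eget, etake]
        have eassoc : b' ++ a ++ v ++ w'.take k = b' ++ (a ++ v) ++ w'.take k := by
          simp [List.append_assoc]
        rwa [eassoc]
      · have hke : k = w'.length := by omega
        have eget : (w' ++ [σ]).get ⟨k, hk⟩ = σ := by
          simp only [List.get_eq_getElem]
          rw [List.getElem_append_right (by omega)]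
          simp [hke]
        have etake : (w' ++ [σ]).take k = w' := by
          rw [hke, List.take_append_of_le_length le_rfl]
          simp
        rw [eget, etake]
        show OmegaWord X (b' ++ a ++ v ++ w') [σ]
        have : OmegaWord X (a ++ (v ++ w')) [σ] := hσ
        have h3 : OmegaWord X (b' ++ (a ++ (v ++ w'))) [σ] := omegaWord_mono this
        have eassoc : b' ++ a ++ v ++ w' = b' ++ (a ++ (v ++ w')) := by
          simp [List.append_assoc]
        rwa [eassoc]

end Helpers3

/-- Lemma 3.3.  `X` has property (D) iff for all admissible words
`a`, `c` with `ac` admissible there is an admissible word `b` with `ba` admissible and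
`ac ∈ ω⁺(b)`. -/
theorem stmt5 {A : Type*} [Fintype A] [Nonempty A] [TopologicalSpace A] [DiscreteTopology A]
    (X : Set (ℤ → A)) (hX : IsSubshift X) :
    PropertyD X ↔
      ∀ a c : List A, a ≠ [] → c ≠ [] → Admissible X a → Admissible X c →
        Admissible X (a ++ c) →
        ∃ b : List A, b ≠ [] ∧ Admissible X b ∧ Admissible X (b ++ a) ∧
          OmegaWord X b (a ++ c) := by
  obtain ⟨hne, hcl, hS⟩ := hX
  constructor
  · intro hD a c ha hc _hadm_a _hadm_c hadm_ac
    obtain ⟨τ, hτ⟩ := admissible_left_extend hadm_ac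
    obtain ⟨b₀, hb₀adm, hpt⟩ := lemmaA hS hD (a ++ c) [τ] (by simp)
      (by simpa using hτ)
    have hOW : OmegaWord X (b₀ ++ [τ]) (a ++ c) :=
      omegaWord_of_pointwise hS hpt
    have hall : Admissible X ((b₀ ++ [τ]) ++ (a ++ c)) :=
      admissible_append_of_omega hS hb₀adm hOW
    have hba : Admissible X ((b₀ ++ [τ]) ++ a) := by
      have : Admissible X (((b₀ ++ [τ]) ++ a) ++ c) := by
        rwa [List.append_assoc]
      exact admissible_of_prefix this
    exact ⟨b₀ ++ [τ], by simp, hb₀adm, hba, hOW⟩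
  · intro hR b σ hb hadm
    have hadm_b : Admissible X b := admissible_of_prefix hadm
    have hadm_σ : Admissible X [σ] := admissible_of_suffix hadm
    obtain ⟨b', hb'ne, _hb'adm, hb'badm, hOW⟩ :=
      hR b [σ] hb (by simp) hadm_b hadm_σ hadm
    refine ⟨b', hb'ne, hb'badm, ?_⟩
    show OmegaWord X (b' ++ b) [σ]
    exact omegaWord_shift hS hOW
end
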